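/- Let $\mathcal{P}$ be an arrangement of hyperplanes in a Euclidean space $V$, each of the form $\{v : \alpha(v) = c_\alpha\}$ for some $\alpha \in R_0$ and constant $c_\alpha$. Let $\mathcal{P}_c \subset \mathcal{P}$ be a subcollection with nonempty common intersection, and let $C$ be a chamber (connected component of the complement) of $\mathcal{P}_c$. If $p \in V$ is antidominant and its distance to every wall $\ker \alpha$ exceeds a constant depending on the shifts $c_\alpha$, then there exists $w \in W_0$ with $wp \in C$. -/

import Mathlib

open Module Finset
open scoped Classical

/-- A reduced integral root system in the dual of a Euclidean space `V`
(not necessarily spanning `V^*`). -/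
structure RedRootSystem (V : Type*) [NormedAddCommGroup V] [InnerProductSpace ℝ V]
    [FiniteDimensional ℝ V] where
  roots : Finset (Module.Dual ℝ V)
  nonzero : ∀ α ∈ roots, α ≠ 0
  coroot : Module.Dual ℝ V → V
  root_coroot_two : ∀ α ∈ roots, α (coroot α) = 2
  reflect_mem : ∀ α ∈ roots, ∀ β ∈ roots, β - β (coroot α) • α ∈ roots
  reduced : ∀ α ∈ roots, ∀ c : ℝ, c • α ∈ roots → c = 1 ∨ c = -1
  integral : ∀ α ∈ roots, ∀ β ∈ roots, ∃ n : ℤ, β (coroot α) = n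

namespace RedRootSystem

variable {V : Type*} [NormedAddCommGroup V] [InnerProductSpace ℝ V] [FiniteDimensional ℝ V]
variable (S : RedRootSystem V)

/-- The Weyl group `W₀`, generated by the reflections in the roots. -/
noncomputable def weylGroup : Subgroup (V ≃ₗ[ℝ] V) :=
  Subgroup.closure {w | ∃ α ∈ S.roots, ∃ h : α (S.coroot α) = 2, w = Module.reflection h}

/-- `W₀`-invariance of the parameter function `k`. -/
def kInvariant (k : Module.Dual ℝ V → ℝ) : Prop :=
  ∀ w ∈ S.weylGroup, ∀ α ∈ S.roots,
    (α ∘ₗ (w : V ≃ₗ[ℝ] V).toLinearMap) ∈ S.roots ∧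
      k (α ∘ₗ (w : V ≃ₗ[ℝ] V).toLinearMap) = k α

/-- `o(v) = #{α : α(v) = k_α} - #{α : α(v) = 0} - dim V`. -/
noncomputable def o (k : Module.Dual ℝ V → ℝ) (v : V) : ℤ :=
  ((S.roots.filter fun α => α v = k α).card : ℤ)
    - ((S.roots.filter fun α => α v = 0).card : ℤ) - (finrank ℝ V : ℤ)

/-- `i_L = #{α : α|_L ≡ k_α} - #{α : α|_L ≡ 0}` for an affine subspace `L`. -/
noncomputable def iA (k : Module.Dual ℝ V → ℝ) (L : AffineSubspace ℝ V) : ℤ :=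
  ((S.roots.filter fun α => ∀ x ∈ L, α x = k α).card : ℤ)
    - ((S.roots.filter fun α => ∀ x ∈ L, α x = 0).card : ℤ)

/-- `o_L = i_L - codim L` for an affine subspace `L`. -/
noncomputable def oA (k : Module.Dual ℝ V → ℝ) (L : AffineSubspace ℝ V) : ℤ :=
  S.iA k L - ((finrank ℝ V : ℤ) - (finrank ℝ L.direction : ℤ))

end RedRootSystem


section AuxLemmas

open Module Finset
open scoped Classical

namespace RedRootSystem

variable {V : Type*} [NormedAddCommGroup V] [InnerProductSpace ℝ V] [FiniteDimensional ℝ V]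
variable (S : RedRootSystem V)

lemma neg_mem_roots {γ : Module.Dual ℝ V} (hγ : γ ∈ S.roots) : -γ ∈ S.roots := by
  have h := S.reflect_mem γ hγ γ hγ
  rw [S.root_coroot_two γ hγ] at h
  have : γ - (2:ℝ) • γ = -γ := by
    rw [two_smul]; abel
  rwa [this] at h

lemma comp_mem_roots {w : V ≃ₗ[ℝ] V} (hw : w ∈ S.weylGroup)
    {α : Module.Dual ℝ V} (hα : α ∈ S.roots) : α ∘ₗ w.toLinearMap ∈ S.roots := by
  unfold weylGroup at hw
  have key : ∀ α, α ∈ S.roots → α ∘ₗ w.toLinearMap ∈ S.roots := by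
    refine Subgroup.closure_induction
      (p := fun g _ => ∀ α, α ∈ S.roots → α ∘ₗ g.toLinearMap ∈ S.roots)
      ?_ ?_ ?_ ?_ hw
    · rintro g ⟨β, hβ, h2, rfl⟩ α hα
      have hcomp : α ∘ₗ (Module.reflection h2).toLinearMap
          = α - α (S.coroot β) • β := by
        ext v
        simp [Module.reflection_apply, mul_comm]
      rw [hcomp]
      exact S.reflect_mem β hβ α hα
    · intro α hα
      simpa using hα
    · intro g h _ _ pg ph α hα
      have hcomp : α ∘ₗ (g * h).toLinearMap = (α ∘ₗ g.toLinearMap) ∘ₗ h.toLinearMap := by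
        ext v; rfl
      rw [hcomp]
      exact ph _ (pg _ hα)
    · intro g _ pg β hβ
      have hinj : Function.Injective (fun α : ↥S.roots => (⟨(α : Module.Dual ℝ V) ∘ₗ g.toLinearMap, pg _ α.2⟩ : ↥S.roots)) := by
        intro a b hab
        have hab' := congrArg Subtype.val hab
        apply Subtype.ext
        ext v
        have := congrArg (fun f : Module.Dual ℝ V => f (g.symm v)) hab'
        simpa using this
      obtain ⟨⟨α, hαr⟩, he⟩ := Finite.injective_iff_surjective.mp hinj ⟨β, hβ⟩
      have he' := congrArg Subtype.val he
      have : β ∘ₗ (g⁻¹ : V ≃ₗ[ℝ] V).toLinearMap = α := by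
        ext v
        have := congrArg (fun f : Module.Dual ℝ V => f (g.symm v)) he'
        simp only at this
        simpa using this.symm
      rw [this]
      exact hαr
  exact key α hα

lemma rho_pos {y : V} (hy : ∀ γ ∈ S.roots, γ y ≠ 0)
    {β : Module.Dual ℝ V} (hβ : β ∈ S.roots) (hβy : 0 < β y) :
    0 < ∑ α ∈ S.roots.filter (fun α => 0 < α y), α (S.coroot β) := by
  set c := S.coroot β with hc
  have hβc : β c = 2 := S.root_coroot_two β hβ
  set σ : Module.Dual ℝ V → Module.Dual ℝ V := fun α => α - α c • β with hσ
  have happ : ∀ (α : Module.Dual ℝ V) (v : V), σ α v = α v - α c * β v := by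
    intro α v
    simp [hσ]
  have hσc : ∀ α : Module.Dual ℝ V, σ α c = -α c := by
    intro α; rw [happ, hβc]; ring
  have hσσ : ∀ α : Module.Dual ℝ V, σ (σ α) = α := by
    intro α; ext v
    rw [happ, happ, hσc]; ring
  have hσmem : ∀ α ∈ S.roots, σ α ∈ S.roots := fun α hα => S.reflect_mem β hβ α hα
  set Pos := S.roots.filter (fun α => 0 < α y) with hPos
  rw [← Finset.sum_filter_add_sum_filter_not Pos (fun α => 0 < σ α y) (fun α => α c)]
  have h1 : ∑ α ∈ Pos.filter (fun α => 0 < σ α y), α c = 0 := by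
    refine Finset.sum_involution (fun α _ => σ α) ?_ ?_ ?_ ?_
    · intro α _
      rw [hσc]; ring
    · intro α _ hαc heq
      apply hαc
      have h0 : α c • β = 0 := sub_eq_self.mp heq
      rcases smul_eq_zero.mp h0 with h | h
      · exact h
      · exact absurd h (S.nonzero β hβ)
    · intro α hα
      simp only [Finset.mem_filter, hPos] at hα ⊢
      obtain ⟨⟨hαr, hαy⟩, hσαy⟩ := hα
      refine ⟨⟨hσmem α hαr, hσαy⟩, ?_⟩
      rw [hσσ]
      exact hαy
    · intro α _
      exact hσσ α
  have h2 : 0 < ∑ α ∈ Pos.filter (fun α => ¬ 0 < σ α y), α c := by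
    refine Finset.sum_pos ?_ ⟨β, ?_⟩
    · intro α hα
      simp only [Finset.mem_filter, hPos] at hα
      obtain ⟨⟨hαr, hαy⟩, hσαy⟩ := hα
      have hne := hy _ (hσmem α hαr)
      have hlt : σ α y < 0 := lt_of_le_of_ne (not_lt.mp hσαy) hne
      rw [happ] at hlt
      have h3 : 0 < α c * β y := by linarith
      rcases mul_pos_iff.mp h3 with ⟨h4, _⟩ | ⟨_, h5⟩
      · exact h4
      · linarith
    · simp only [Finset.mem_filter, hPos]
      refine ⟨⟨hβ, hβy⟩, ?_⟩
      rw [happ, hβc]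
      push_neg
      linarith
  linarith

end RedRootSystem

lemma dense_ne_zero {V : Type*} [NormedAddCommGroup V] [InnerProductSpace ℝ V]
    [FiniteDimensional ℝ V] (γ : Module.Dual ℝ V) (hγ : γ ≠ 0) :
    Dense {v : V | γ v ≠ 0} := by
  obtain ⟨u, hu⟩ := DFunLike.ne_iff.mp hγ
  simp only [LinearMap.zero_apply] at hu
  rw [Metric.dense_iff]
  intro v r hr
  by_cases hv : γ v ≠ 0
  · exact ⟨v, Metric.mem_ball_self hr, hv⟩
  · push_neg at hv
    set t : ℝ := r / (2 * (‖u‖ + 1)) with ht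
    have hupos : (0:ℝ) < ‖u‖ + 1 := by positivity
    have htpos : 0 < t := by positivity
    refine ⟨v + t • u, ?_, ?_⟩
    · rw [Metric.mem_ball, dist_eq_norm, add_sub_cancel_left, norm_smul, Real.norm_eq_abs,
        abs_of_pos htpos]
      have h1 : t * ‖u‖ ≤ t * (‖u‖ + 1) := by nlinarith [norm_nonneg u]
      have h2 : t * (‖u‖ + 1) = r / 2 := by
        rw [ht, div_mul_eq_mul_div, div_eq_div_iff (by positivity) two_ne_zero]; ring
      linarith
    · simp only [Set.mem_setOf_eq, map_add, map_smul, smul_eq_mul, hv, zero_add]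
      exact mul_ne_zero (ne_of_gt htpos) hu

lemma isOpen_ne_zero {V : Type*} [NormedAddCommGroup V] [InnerProductSpace ℝ V]
    [FiniteDimensional ℝ V] (γ : Module.Dual ℝ V) :
    IsOpen {v : V | γ v ≠ 0} := by
  have hcont : Continuous γ := γ.continuous_of_finiteDimensional
  have : {v : V | γ v ≠ 0} = γ ⁻¹' ({0}ᶜ) := rfl
  rw [this]
  exact isOpen_compl_singleton.preimage hcont

end AuxLemmas


set_option maxHeartbeats 1000000 in
/-- Given a central subarrangement of shifted root hyperplanes
and a chamber `C` of it, any point `p` (in particular any antidominant point)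
whose distance to every root wall is sufficiently large (depending on the
shifts) can be mapped into `C` by some `w ∈ W₀`. -/
theorem weyl_elt_into_chamber {V : Type*} [NormedAddCommGroup V]
    [InnerProductSpace ℝ V] [FiniteDimensional ℝ V] (S : RedRootSystem V)
    {ι : Type*} [Fintype ι] (a : ι → Module.Dual ℝ V) (c : ι → ℝ)
    (ha : ∀ i, a i ∈ S.roots)
    (hcentral : ∃ x : V, ∀ i, a i x = c i)
    (x₀ : V) (hx₀ : x₀ ∈ {v : V | ∀ i, a i v ≠ c i})
    (C : Set V) (hC : C = connectedComponentIn {v : V | ∀ i, a i v ≠ c i} x₀)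
    (P : Finset (Module.Dual ℝ V)) (hP : P ⊆ S.roots)
    (hpos : ∀ α ∈ S.roots, α ∈ P ∨ -α ∈ P) :
    ∃ K : ℝ, ∀ p : V, (∀ α ∈ P, α p < -K) →
      ∃ w ∈ S.weylGroup, (w : V ≃ₗ[ℝ] V) p ∈ C := by
  
  classical
  obtain ⟨x, hx⟩ := hcentral
  set U : Set V := {v : V | ∀ i, a i v ≠ c i} with hU
  set U₀ : Set V := {v : V | ∀ i, a i v ≠ 0} with hU₀def
  have hU₀open : IsOpen U₀ := by
    have hEq : U₀ = ⋂ i, {v : V | a i v ≠ 0} := Set.setOf_forall _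
    rw [hEq]
    exact isOpen_iInter_of_finite fun i => isOpen_ne_zero (a i)
  have hx₀U₀ : x₀ - x ∈ U₀ := by
    intro i
    rw [map_sub, hx i]
    exact sub_ne_zero_of_ne (hx₀ i)
  set comp₀ := connectedComponentIn U₀ (x₀ - x) with hcomp₀
  have hcompOpen : IsOpen comp₀ := hU₀open.connectedComponentIn
  have hcompNe : (x₀ - x) ∈ comp₀ := mem_connectedComponentIn hx₀U₀
  have hdense : Dense (⋂ γ : ↥S.roots, {v : V | (γ : Module.Dual ℝ V) v ≠ 0}) :=
    dense_iInter_of_isOpen (fun γ => isOpen_ne_zero _)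
      (fun γ => dense_ne_zero _ (S.nonzero _ γ.2))
  obtain ⟨y, hyG, hycomp⟩ := hdense.exists_mem_open hcompOpen ⟨_, hcompNe⟩
  have hy : ∀ γ ∈ S.roots, γ y ≠ 0 := fun γ hγ => Set.mem_iInter.mp hyG ⟨γ, hγ⟩
  set K : ℝ := ∑ α ∈ S.roots, |α x| with hK
  have hK0 : 0 ≤ K := by
    rw [hK]
    exact Finset.sum_nonneg fun _ _ => abs_nonneg _
  have hKi : ∀ γ ∈ S.roots, |γ x| ≤ K := by
    intro γ hγ
    rw [hK]
    exact Finset.single_le_sum (f := fun α : Module.Dual ℝ V => |α x|) (fun _ _ => abs_nonneg _) hγ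
  refine ⟨K, fun p hp => ?_⟩
  have hbigp : ∀ γ ∈ S.roots, K < |γ p| := by
    intro γ hγ
    rcases hpos γ hγ with h | h
    · have := hp γ h
      rw [lt_abs]; right; linarith
    · have := hp (-γ) h
      rw [LinearMap.neg_apply] at this
      rw [lt_abs]; left; linarith
  set Pos := S.roots.filter (fun α => 0 < α y) with hPosdef
  set F : (V ≃ₗ[ℝ] V) → ℝ := fun w => ∑ α ∈ Pos, α (w p) with hF
  set A : Set ℝ := F '' (S.weylGroup : Set (V ≃ₗ[ℝ] V)) with hA
  have hAne : A.Nonempty := ⟨F 1, 1, SetLike.mem_coe.mpr (one_mem _), rfl⟩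
  have hAfin : A.Finite := by
    set Vals : Finset ℝ := S.roots.image fun γ => γ p with hVals
    have hBfin : (Set.pi Set.univ fun _ : ↥Pos => (Vals : Set ℝ)).Finite :=
      Set.Finite.pi fun _ => Vals.finite_toSet
    refine Set.Finite.subset (hBfin.image fun f => ∑ α ∈ Pos.attach, f α) ?_
    rintro _ ⟨w, hw, rfl⟩
    refine ⟨fun α : ↥Pos => (α : Module.Dual ℝ V) (w p), Set.mem_univ_pi.mpr fun α => ?_, ?_⟩
    · have hαΦ : (α : Module.Dual ℝ V) ∈ S.roots := Finset.filter_subset _ _ α.2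
      have hroot : (α : Module.Dual ℝ V) ∘ₗ w.toLinearMap ∈ S.roots :=
        S.comp_mem_roots hw hαΦ
      exact Finset.mem_coe.mpr (Finset.mem_image.mpr ⟨_, hroot, rfl⟩)
    · exact Finset.sum_attach Pos fun α => α (w p)
  obtain ⟨w₀, hw₀W, hFw₀⟩ := hAne.csSup_mem hAfin
  have hw₀W : w₀ ∈ S.weylGroup := hw₀W
  have hmax : ∀ w ∈ S.weylGroup, F w ≤ F w₀ := by
    intro w hw
    rw [hFw₀]
    exact le_csSup hAfin.bddAbove ⟨w, hw, rfl⟩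
  have hbig' : ∀ γ ∈ S.roots, K < |γ (w₀ p)| := by
    intro γ hγ
    have hroot := S.comp_mem_roots hw₀W hγ
    have := hbigp _ hroot
    simpa using this
  have hstep : ∀ β ∈ S.roots, 0 < β y → 0 < β (w₀ p) := by
    intro β hβΦ hβy
    by_contra hle
    have hne : β (w₀ p) ≠ 0 := by
      intro h
      have := hbig' β hβΦ
      rw [h, abs_zero] at this
      linarith
    have hneg : β (w₀ p) < 0 := lt_of_le_of_ne (not_lt.mp hle) hne
    have h2 := S.root_coroot_two β hβΦ
    have hrW : (Module.reflection h2 : V ≃ₗ[ℝ] V) ∈ S.weylGroup :=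
      Subgroup.subset_closure ⟨β, hβΦ, h2, rfl⟩
    have hw' : (Module.reflection h2 : V ≃ₗ[ℝ] V) * w₀ ∈ S.weylGroup := mul_mem hrW hw₀W
    have hρ := S.rho_pos hy hβΦ hβy
    rw [← hPosdef] at hρ
    have hF' : F ((Module.reflection h2 : V ≃ₗ[ℝ] V) * w₀)
        = F w₀ - β (w₀ p) * ∑ α ∈ Pos, α (S.coroot β) := by
      rw [hF]
      simp only
      rw [Finset.mul_sum, ← Finset.sum_sub_distrib]
      refine Finset.sum_congr rfl fun α _ => ?_
      have happly : ((Module.reflection h2 : V ≃ₗ[ℝ] V) * w₀) p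
          = w₀ p - β (w₀ p) • S.coroot β := by
        show (Module.reflection h2) (w₀ p) = _
        rw [Module.reflection_apply]
      rw [happly, map_sub, map_smul, smul_eq_mul]
    have hle2 := hmax _ hw'
    rw [hF'] at hle2
    have hposmul : 0 < (-β (w₀ p)) * ∑ α ∈ Pos, α (S.coroot β) :=
      mul_pos (by linarith) hρ
    linarith
  set D : Set V := ⋂ i, {v : V | a i y * c i < a i y * a i v} with hD
  have hDconv : Convex ℝ D := by
    refine convex_iInter fun i => ?_
    have hlin : IsLinearMap ℝ (fun v : V => a i y * a i v) :=
      ⟨fun u v => by rw [map_add]; ring, fun r v => by rw [map_smul]; simp only [smul_eq_mul]; ring⟩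
    exact convex_halfSpace_gt hlin _
  have hDU : D ⊆ U := by
    intro v hv i heq
    have h1 : a i y * c i < a i y * a i v := Set.mem_iInter.mp hv i
    rw [heq] at h1
    exact lt_irrefl _ h1
  have hxyD : x + y ∈ D := by
    refine Set.mem_iInter.mpr fun i => ?_
    have h1 : a i (x + y) = c i + a i y := by rw [map_add, hx i]
    show a i y * c i < a i y * a i (x + y)
    rw [h1]
    have hne : a i y ≠ 0 := hy _ (ha i)
    nlinarith [mul_self_pos.mpr hne]
  have hwpD : (w₀ : V ≃ₗ[ℝ] V) p ∈ D := by
    refine Set.mem_iInter.mpr fun i => ?_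
    have hKi' : |a i x| ≤ K := hKi _ (ha i)
    have habs := hbig' _ (ha i)
    have hxK := abs_le.mp hKi'
    show a i y * c i < a i y * a i (w₀ p)
    rcases lt_trichotomy (a i y) 0 with hneg | h0 | hposy
    · have hnegroot : -(a i) ∈ S.roots := S.neg_mem_roots (ha i)
      have hstep' := hstep (-(a i)) hnegroot (by rw [LinearMap.neg_apply]; linarith)
      rw [LinearMap.neg_apply] at hstep'
      have hlt0 : a i (w₀ p) < 0 := by linarith
      have habs' : |a i (w₀ p)| = -(a i (w₀ p)) := abs_of_neg hlt0
      rw [habs'] at habs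
      have hlt : a i (w₀ p) < c i := by
        rw [← hx i] at *
        linarith
      exact mul_lt_mul_of_neg_left hlt hneg
    · exact absurd h0 (hy _ (ha i))
    · have hstep' := hstep (a i) (ha i) hposy
      have habs' : |a i (w₀ p)| = a i (w₀ p) := abs_of_pos hstep'
      rw [habs'] at habs
      have hlt : c i < a i (w₀ p) := by
        rw [← hx i] at *
        linarith
      exact mul_lt_mul_of_pos_left hlt hposy
  have hconn : IsPreconnected ((fun v => x + v) '' comp₀) :=
    isPreconnected_connectedComponentIn.image _
      (Continuous.continuousOn (continuous_const.add continuous_id))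
  have hTU : ((fun v => x + v) '' comp₀) ⊆ U := by
    rintro _ ⟨v, hv, rfl⟩ i
    have hvU₀ : v ∈ U₀ := connectedComponentIn_subset _ _ hv
    have h1 := hvU₀ i
    rw [map_add, hx i]
    intro h
    apply h1
    linarith
  have hx₀T : x₀ ∈ ((fun v => x + v) '' comp₀) := ⟨x₀ - x, hcompNe, by simp⟩
  have hxyT : x + y ∈ ((fun v => x + v) '' comp₀) := ⟨y, hycomp, rfl⟩
  have hxyC : x + y ∈ connectedComponentIn U x₀ :=
    hconn.subset_connectedComponentIn hx₀T hTU hxyT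
  have hDC : D ⊆ connectedComponentIn U (x + y) :=
    hDconv.isPreconnected.subset_connectedComponentIn hxyD hDU
  have hCC : connectedComponentIn U x₀ = connectedComponentIn U (x + y) :=
    connectedComponentIn_eq hxyC
  refine ⟨w₀, hw₀W, ?_⟩
  rw [hC, hCC]
  exact hDC hwpD
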